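/- Let Φ be a finite point set in ℝ^d, Γ a connected graph on k vertices, and for the window W ⊂ ℝ^d and radius r define J(Γ) using the condition Φ∩W(B_X(r)) = k (isolation within the window) and J̃(Γ) using Φ(B_X(r)) = k (isolation in all of ℝ^d). Then J̃(Γ) ≤ J(Γ) ≤ J̃(Γ) + G', where G' is the number of Γ-subgraphs with all vertices in W but at least one vertex within distance (k+1)r of the boundary of W. -/

import Mathlib

open Metric

/-- The geometric graph on the points `x 0, …, x (k-1)` of `ℝ^d` with radius `r`:
vertices `i ≠ j` are adjacent iff `dist (x i) (x j) ≤ r`. -/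
def geomGraph {d k : ℕ} (x : Fin k → EuclideanSpace ℝ (Fin d)) (r : ℝ) :
    SimpleGraph (Fin k) where
  Adj i j := i ≠ j ∧ dist (x i) (x j) ≤ r
  symm := by
    constructor
    intro i j h
    exact ⟨h.1.symm, by rw [dist_comm]; exact h.2⟩
  loopless := by constructor; intro i h; exact h.1 rfl

open Classical in
/-- `h_Γ(x, r) = 1` iff the geometric graph on `x` with radius `r` is isomorphic to `Γ`. -/
noncomputable def hGamma {d k : ℕ} (Γ : SimpleGraph (Fin k))
    (x : Fin k → EuclideanSpace ℝ (Fin d)) (r : ℝ) : ℝ :=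
  if Nonempty (geomGraph x r ≃g Γ) then 1 else 0


open Classical in
/-- `Γ`-component count of `Φ ∩ W` with isolation required only *within the window* `W`:
the tuple must contain all points of `Φ ∩ W` within distance `r` of it. -/
noncomputable def componentCountWin {d k : ℕ} (Φ : Finset (EuclideanSpace ℝ (Fin d)))
    (W : Set (EuclideanSpace ℝ (Fin d))) (Γ : SimpleGraph (Fin k)) (r : ℝ) : ℝ :=
  (1 / (Nat.factorial k : ℝ)) *
    ∑ x : Fin k → Φ, (if Function.Injective x ∧ ∀ i, (x i : EuclideanSpace ℝ (Fin d)) ∈ W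
        then 1 else 0) *
      hGamma Γ (fun i => (x i : EuclideanSpace ℝ (Fin d))) r *
      (if (Φ.filter (fun p => p ∈ W ∧
          ∃ i, dist p (x i : EuclideanSpace ℝ (Fin d)) ≤ r)).card = k then 1 else 0)

open Classical in
/-- `Γ`-component count of `Φ ∩ W` with isolation required in all of `ℝ^d`. -/
noncomputable def componentCountGlob {d k : ℕ} (Φ : Finset (EuclideanSpace ℝ (Fin d)))
    (W : Set (EuclideanSpace ℝ (Fin d))) (Γ : SimpleGraph (Fin k)) (r : ℝ) : ℝ :=
  (1 / (Nat.factorial k : ℝ)) *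
    ∑ x : Fin k → Φ, (if Function.Injective x ∧ ∀ i, (x i : EuclideanSpace ℝ (Fin d)) ∈ W
        then 1 else 0) *
      hGamma Γ (fun i => (x i : EuclideanSpace ℝ (Fin d))) r *
      (if (Φ.filter (fun p =>
          ∃ i, dist p (x i : EuclideanSpace ℝ (Fin d)) ≤ r)).card = k then 1 else 0)

open Classical in
/-- Number of `Γ`-subgraphs of `Φ ∩ W` having at least one vertex within distance
`(k+1)·r` of the boundary of `W`. -/
noncomputable def boundaryCount {d k : ℕ} (Φ : Finset (EuclideanSpace ℝ (Fin d)))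
    (W : Set (EuclideanSpace ℝ (Fin d))) (Γ : SimpleGraph (Fin k)) (r : ℝ) : ℝ :=
  (1 / (Nat.factorial k : ℝ)) *
    ∑ x : Fin k → Φ, (if Function.Injective x ∧ ∀ i, (x i : EuclideanSpace ℝ (Fin d)) ∈ W
        then 1 else 0) *
      hGamma Γ (fun i => (x i : EuclideanSpace ℝ (Fin d))) r *
      (if ∃ i, Metric.infDist (x i : EuclideanSpace ℝ (Fin d)) (frontier W) ≤ (k+1) * r
        then 1 else 0)

lemma frontier_hit {E : Type*} [TopologicalSpace E] {s W : Set E}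
    (hs : IsPreconnected s) {a b : E} (ha : a ∈ s) (hb : b ∈ s)
    (haW : a ∈ W) (hbW : b ∉ W) : ∃ y ∈ s, y ∈ frontier W := by
  by_contra h
  push_neg at h
  have hsub : s ⊆ interior W ∪ interior Wᶜ := by
    intro y hy
    have hy' := h y hy
    rcases Classical.em (y ∈ closure W) with hc | hc
    · left
      by_contra hi
      exact hy' ⟨hc, hi⟩
    · right
      rw [interior_compl]
      exact hc
  have h1 : (s ∩ interior W).Nonempty := by
    refine ⟨a, ha, ?_⟩
    rcases hsub ha with h' | h'
    · exact h'
    · exact absurd haW (interior_subset h')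
  have h2 : (s ∩ interior Wᶜ).Nonempty := by
    refine ⟨b, hb, ?_⟩
    rcases hsub hb with h' | h'
    · exact absurd (interior_subset h') hbW
    · exact h'
  obtain ⟨y, _, hy1, hy2⟩ := hs (interior W) (interior Wᶜ) isOpen_interior isOpen_interior hsub h1 h2
  exact (interior_subset hy2) (interior_subset hy1)

/-- `J̃(Γ) ≤ J(Γ) ≤ J̃(Γ) + G'`, where `J` requires isolation only within
the window `W`, `J̃` requires isolation in all of `ℝ^d`, and `G'` counts `Γ`-subgraphs
within distance `(k+1)r` of the boundary of `W`. -/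
theorem stmt_18 {d k : ℕ} (hk : 2 ≤ k) (Γ : SimpleGraph (Fin k)) (hconn : Γ.Connected)
    (Φ : Finset (EuclideanSpace ℝ (Fin d))) (W : Set (EuclideanSpace ℝ (Fin d)))
    (r : ℝ) (hr : 0 < r) :
    componentCountGlob Φ W Γ r ≤ componentCountWin Φ W Γ r ∧
      componentCountWin Φ W Γ r ≤ componentCountGlob Φ W Γ r + boundaryCount Φ W Γ r := by
  
  classical
  have hfac : (0:ℝ) ≤ 1 / (Nat.factorial k : ℝ) := by positivity
  -- key per-tuple lemma
  have key : ∀ x : Fin k → Φ, Function.Injective x →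
      (∀ i, (x i : EuclideanSpace ℝ (Fin d)) ∈ W) →
      ((Φ.filter (fun p => ∃ i, dist p (x i : EuclideanSpace ℝ (Fin d)) ≤ r)).card = k →
        (Φ.filter (fun p => p ∈ W ∧
          ∃ i, dist p (x i : EuclideanSpace ℝ (Fin d)) ≤ r)).card = k) ∧
      ((Φ.filter (fun p => p ∈ W ∧
          ∃ i, dist p (x i : EuclideanSpace ℝ (Fin d)) ≤ r)).card = k →
        (Φ.filter (fun p => ∃ i, dist p (x i : EuclideanSpace ℝ (Fin d)) ≤ r)).card = k ∨
        ∃ i, Metric.infDist (x i : EuclideanSpace ℝ (Fin d)) (frontier W) ≤ (k+1) * r) := by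
    intro x hinj hW
    set img : Finset (EuclideanSpace ℝ (Fin d)) :=
      Finset.image (fun i => (x i : EuclideanSpace ℝ (Fin d))) Finset.univ with himg
    have hinj' : Function.Injective (fun i => (x i : EuclideanSpace ℝ (Fin d))) := by
      intro i j h
      exact hinj (Subtype.ext h)
    have hcard_img : img.card = k := by
      rw [himg, Finset.card_image_of_injective _ hinj', Finset.card_univ, Fintype.card_fin]
    set T := Φ.filter (fun p => p ∈ W ∧
      ∃ i, dist p (x i : EuclideanSpace ℝ (Fin d)) ≤ r) with hT
    set S := Φ.filter (fun p => ∃ i, dist p (x i : EuclideanSpace ℝ (Fin d)) ≤ r) with hS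
    have hTS : T ⊆ S := by
      intro p hp
      rw [hT, Finset.mem_filter] at hp
      rw [hS, Finset.mem_filter]
      exact ⟨hp.1, hp.2.2⟩
    have himgT : img ⊆ T := by
      intro p hp
      rw [himg, Finset.mem_image] at hp
      obtain ⟨i, _, rfl⟩ := hp
      rw [hT, Finset.mem_filter]
      exact ⟨(x i).2, hW i, ⟨i, by simp [le_of_lt hr]⟩⟩
    constructor
    · intro hScard
      have : T = S := Finset.eq_of_subset_of_card_le hTS (by
        rw [hScard]
        calc k = img.card := hcard_img.symm
        _ ≤ T.card := Finset.card_le_card himgT)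
      rw [this, hScard]
    · intro hTcard
      by_cases hSc : S.card = k
      · exact Or.inl hSc
      · right
        have hTimg : T = img := (Finset.eq_of_subset_of_card_le himgT
          (by rw [hTcard, hcard_img])).symm
        have hST : ¬ S ⊆ T := by
          intro h
          exact hSc (by rw [← Finset.Subset.antisymm hTS h]; exact hTcard)
        obtain ⟨p, hpS, hpT⟩ := Finset.not_subset.mp hST
        rw [hS, Finset.mem_filter] at hpS
        obtain ⟨hpΦ, i, hpi⟩ := hpS
        have hpW : p ∉ W := by
          intro hpw
          exact hpT (by rw [hT, Finset.mem_filter]; exact ⟨hpΦ, hpw, ⟨i, hpi⟩⟩)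
        refine ⟨i, ?_⟩
        obtain ⟨y, hyseg, hyfr⟩ := frontier_hit (W := W)
          ((convex_segment (x i : EuclideanSpace ℝ (Fin d)) p).isPreconnected)
          (left_mem_segment ℝ _ _) (right_mem_segment ℝ _ _) (hW i) hpW
        have hdy : dist (x i : EuclideanSpace ℝ (Fin d)) y ≤ r := by
          have hsub : segment ℝ (x i : EuclideanSpace ℝ (Fin d)) p ⊆
              Metric.closedBall (x i : EuclideanSpace ℝ (Fin d)) r := by
            apply (convex_closedBall _ _).segment_subset
            · simp [le_of_lt hr]
            · simpa [Metric.mem_closedBall, dist_comm] using hpi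
          simpa [Metric.mem_closedBall, dist_comm y] using hsub hyseg
        calc Metric.infDist (x i : EuclideanSpace ℝ (Fin d)) (frontier W)
            ≤ dist (x i : EuclideanSpace ℝ (Fin d)) y := Metric.infDist_le_dist_of_mem hyfr
          _ ≤ r := hdy
          _ ≤ (k+1) * r := by nlinarith [hr.le]
  constructor
  · unfold componentCountGlob componentCountWin
    apply mul_le_mul_of_nonneg_left _ hfac
    apply Finset.sum_le_sum
    intro x _
    by_cases hx : Function.Injective x ∧ ∀ i, (x i : EuclideanSpace ℝ (Fin d)) ∈ W
    · simp only [if_pos hx]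
      have hh : (0:ℝ) ≤ hGamma Γ (fun i => (x i : EuclideanSpace ℝ (Fin d))) r := by
        unfold hGamma; split <;> norm_num
      by_cases hg : (Φ.filter (fun p =>
          ∃ i, dist p (x i : EuclideanSpace ℝ (Fin d)) ≤ r)).card = k
      · rw [if_pos hg, if_pos ((key x hx.1 hx.2).1 hg)]
      · rw [if_neg hg, mul_zero]
        apply mul_nonneg (by simpa using hh)
        split <;> norm_num
    · simp [if_neg hx]
  · unfold componentCountGlob componentCountWin boundaryCount
    rw [← mul_add, ← Finset.sum_add_distrib]
    apply mul_le_mul_of_nonneg_left _ hfac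
    apply Finset.sum_le_sum
    intro x _
    by_cases hx : Function.Injective x ∧ ∀ i, (x i : EuclideanSpace ℝ (Fin d)) ∈ W
    · simp only [if_pos hx]
      have hh : (0:ℝ) ≤ hGamma Γ (fun i => (x i : EuclideanSpace ℝ (Fin d))) r := by
        unfold hGamma; split <;> norm_num
      by_cases hw : (Φ.filter (fun p => p ∈ W ∧
          ∃ i, dist p (x i : EuclideanSpace ℝ (Fin d)) ≤ r)).card = k
      · rw [if_pos hw]
        rcases (key x hx.1 hx.2).2 hw with hg | hb
        · rw [if_pos hg]
          have : (0:ℝ) ≤ 1 * hGamma Γ (fun i => (x i : EuclideanSpace ℝ (Fin d))) r *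
              (if ∃ i, Metric.infDist (x i : EuclideanSpace ℝ (Fin d)) (frontier W)
                ≤ (k+1) * r then (1:ℝ) else 0) := by
            apply mul_nonneg (by simpa using hh)
            split <;> norm_num
          linarith
        · rw [if_pos hb]
          have : (0:ℝ) ≤ 1 * hGamma Γ (fun i => (x i : EuclideanSpace ℝ (Fin d))) r *
              (if (Φ.filter (fun p => ∃ i, dist p (x i : EuclideanSpace ℝ (Fin d)) ≤ r)).card = k
                then (1:ℝ) else 0) := by
            apply mul_nonneg (by simpa using hh)
            split <;> norm_num
          linarith
      · rw [if_neg hw]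
        have h1 : (0:ℝ) ≤ 1 * hGamma Γ (fun i => (x i : EuclideanSpace ℝ (Fin d))) r *
            (if (Φ.filter (fun p => ∃ i, dist p (x i : EuclideanSpace ℝ (Fin d)) ≤ r)).card = k
              then (1:ℝ) else 0) := by
          apply mul_nonneg (by simpa using hh)
          split <;> norm_num
        have h2 : (0:ℝ) ≤ 1 * hGamma Γ (fun i => (x i : EuclideanSpace ℝ (Fin d))) r *
            (if ∃ i, Metric.infDist (x i : EuclideanSpace ℝ (Fin d)) (frontier W)
              ≤ (k+1) * r then (1:ℝ) else 0) := by
          apply mul_nonneg (by simpa using hh)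
          split <;> norm_num
        have hh0 : (1:ℝ) * hGamma Γ (fun i => (x i : EuclideanSpace ℝ (Fin d))) r * 0 = 0 := by ring
        linarith [hh0.le]
    · simp [if_neg hx]
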